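/- The sets 𝔅_μ and ℭ_ν are convex and weak*-closed subsets of C_b(Ω)′′ (i.e. they are regularly convex). -/

import Mathlib

open MeasureTheory BoundedContinuousFunction NormedSpace

noncomputable section

variable {d : ℕ}

/-- Extension `h ↦ h ⊕ 0` as a continuous linear map `C_b(X) → C_b(Ω)`. -/
def extX {X Y : Set (EuclideanSpace ℝ (Fin d))} :
    (↥X →ᵇ ℝ) →L[ℝ] ((↥X × ↥Y) →ᵇ ℝ) :=
  LinearMap.mkContinuous
    { toFun := fun h => h.compContinuous (ContinuousMap.fst)
      map_add' := fun h₁ h₂ => by ext z; simp [compContinuous_apply]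
      map_smul' := fun c h => by ext z; simp [compContinuous_apply] }
    1 (fun h => by simpa using h.norm_compContinuous_le (ContinuousMap.fst))

/-- Extension `g ↦ 0 ⊕ g` as a continuous linear map `C_b(Y) → C_b(Ω)`. -/
def extY {X Y : Set (EuclideanSpace ℝ (Fin d))} :
    (↥Y →ᵇ ℝ) →L[ℝ] ((↥X × ↥Y) →ᵇ ℝ) :=
  LinearMap.mkContinuous
    { toFun := fun g => g.compContinuous (ContinuousMap.snd)
      map_add' := fun h₁ h₂ => by ext z; simp [compContinuous_apply]
      map_smul' := fun c h => by ext z; simp [compContinuous_apply] }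
    1 (fun g => by simpa using g.norm_compContinuous_le (ContinuousMap.snd))

/-- A finite Borel measure, as a continuous linear functional on bounded
continuous functions. -/
def integrationCLM {Z : Type*} [TopologicalSpace Z] [MeasurableSpace Z]
    [OpensMeasurableSpace Z] (μ : Measure Z) [IsFiniteMeasure μ] : StrongDual ℝ (Z →ᵇ ℝ) :=
  LinearMap.mkContinuous
    { toFun := fun h => ∫ x, h x ∂μ
      map_add' := fun h g => integral_add (h.integrable μ) (g.integrable μ)
      map_smul' := fun c h => by simpa using integral_smul c (fun x => h x) }
    (μ Set.univ).toReal
    (fun h => by simpa [mul_comm, measureReal_def] using h.norm_integral_le_mul_norm μ)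

/-- The set `𝔅_μ ⊆ C_b(Ω)′′` of elements of the form `b ⊕ 0` with `b(μ) = 0`. -/
def Bmu (X Y : Set (EuclideanSpace ℝ (Fin d))) (μ : Measure ↥X) [IsFiniteMeasure μ] :
    Set (StrongDual ℝ (StrongDual ℝ ((↥X × ↥Y) →ᵇ ℝ))) :=
  {a | ∃ b : StrongDual ℝ (StrongDual ℝ (↥X →ᵇ ℝ)),
    (∀ η : StrongDual ℝ ((↥X × ↥Y) →ᵇ ℝ), a η = b (η.comp extX)) ∧
    b (integrationCLM μ) = 0}

/-- The set `ℭ_ν ⊆ C_b(Ω)′′` of elements of the form `0 ⊕ c` with `c(ν) = 0`. -/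
def Cnu (X Y : Set (EuclideanSpace ℝ (Fin d))) (ν : Measure ↥Y) [IsFiniteMeasure ν] :
    Set (StrongDual ℝ (StrongDual ℝ ((↥X × ↥Y) →ᵇ ℝ))) :=
  {a | ∃ c : StrongDual ℝ (StrongDual ℝ (↥Y →ᵇ ℝ)),
    (∀ η : StrongDual ℝ ((↥X × ↥Y) →ᵇ ℝ), a η = c (η.comp extY)) ∧
    c (integrationCLM ν) = 0}

/-- A subset of the bidual is weak*-closed iff its image under the canonical
identification with the weak* dual is closed. -/
def WeakStarClosed (Z : Type*) [NormedAddCommGroup Z] [NormedSpace ℝ Z]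
    (S : Set (StrongDual ℝ Z)) : Prop :=
  IsClosed ((fun φ : StrongDual ℝ Z => StrongDual.toWeakDual φ) '' S : Set (WeakDual ℝ Z))

/-- Restriction `f ↦ f(·, y₀)` as a continuous linear map `C_b(Ω) → C_b(X)`. -/
def restXmap {X Y : Set (EuclideanSpace ℝ (Fin d))} (y₀ : ↥Y) :
    ((↥X × ↥Y) →ᵇ ℝ) →L[ℝ] (↥X →ᵇ ℝ) :=
  LinearMap.mkContinuous
    { toFun := fun f => f.compContinuous ⟨fun x => (x, y₀), by continuity⟩
      map_add' := fun f g => by ext x; simp [compContinuous_apply]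
      map_smul' := fun c f => by ext x; simp [compContinuous_apply] }
    1 (fun f => by simpa using f.norm_compContinuous_le _)

/-- Restriction `f ↦ f(x₀, ·)` as a continuous linear map `C_b(Ω) → C_b(Y)`. -/
def restYmap {X Y : Set (EuclideanSpace ℝ (Fin d))} (x₀ : ↥X) :
    ((↥X × ↥Y) →ᵇ ℝ) →L[ℝ] (↥Y →ᵇ ℝ) :=
  LinearMap.mkContinuous
    { toFun := fun f => f.compContinuous ⟨fun y => (x₀, y), by continuity⟩
      map_add' := fun f g => by ext y; simp [compContinuous_apply]
      map_smul' := fun c f => by ext y; simp [compContinuous_apply] }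
    1 (fun f => by simpa using f.norm_compContinuous_le _)

lemma restXmap_comp_extX {X Y : Set (EuclideanSpace ℝ (Fin d))} (y₀ : ↥Y) :
    (restXmap (X := X) y₀).comp extX = ContinuousLinearMap.id ℝ (↥X →ᵇ ℝ) := by
  ext h x
  simp [restXmap, extX, compContinuous_apply]

lemma restYmap_comp_extY {X Y : Set (EuclideanSpace ℝ (Fin d))} (x₀ : ↥X) :
    (restYmap (Y := Y) x₀).comp extY = ContinuousLinearMap.id ℝ (↥Y →ᵇ ℝ) := by
  ext g y
  simp [restYmap, extY, compContinuous_apply]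

/-- General helper: a set of the form `{a | ∃ b, a = b ∘ π ∧ b m = 0}` where `π` has a
continuous linear section `σ` is convex and weak*-closed. -/
lemma regularlyConvex_aux {E F : Type*} [NormedAddCommGroup E] [NormedSpace ℝ E]
    [NormedAddCommGroup F] [NormedSpace ℝ F]
    (π : StrongDual ℝ E →L[ℝ] StrongDual ℝ F) (σ : StrongDual ℝ F →L[ℝ] StrongDual ℝ E)
    (hπσ : ∀ φ, π (σ φ) = φ) (m : StrongDual ℝ F)
    (S : Set (StrongDual ℝ (StrongDual ℝ E)))
    (hS : S = {a | ∃ b : StrongDual ℝ (StrongDual ℝ F), (∀ η, a η = b (π η)) ∧ b m = 0}) :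
    Convex ℝ S ∧ WeakStarClosed (StrongDual ℝ E) S := by
  subst hS
  constructor
  · rintro a ⟨b, hab, hbm⟩ a' ⟨b', hab', hbm'⟩ t s ht hs hts
    refine ⟨t • b + s • b', fun η => ?_, ?_⟩
    · simp [ContinuousLinearMap.add_apply, ContinuousLinearMap.smul_apply, hab η, hab' η]
    · simp [ContinuousLinearMap.add_apply, ContinuousLinearMap.smul_apply, hbm, hbm']
  · have himg : (fun φ : StrongDual ℝ (StrongDual ℝ E) => StrongDual.toWeakDual φ) ''
        {a | ∃ b : StrongDual ℝ (StrongDual ℝ F), (∀ η, a η = b (π η)) ∧ b m = 0} =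
        (⋂ η ∈ {η : StrongDual ℝ E | π η = 0}, {ψ : WeakDual ℝ (StrongDual ℝ E) | ψ η = 0}) ∩
          {ψ : WeakDual ℝ (StrongDual ℝ E) | ψ (σ m) = 0} := by
      ext ψ
      constructor
      · rintro ⟨a, ⟨b, hab, hbm⟩, rfl⟩
        refine ⟨Set.mem_iInter₂.mpr fun η hη => ?_, ?_⟩
        · show a η = 0
          rw [hab, hη, map_zero]
        · show a (σ m) = 0
          rw [hab, hπσ, hbm]
      · rintro ⟨h1, h2⟩
        set a : StrongDual ℝ (StrongDual ℝ E) := StrongDual.toWeakDual.symm ψ with ha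
        have haψ : ∀ η, a η = ψ η := fun η => rfl
        refine ⟨a, ⟨a.comp σ, fun η => ?_, ?_⟩, rfl⟩
        · have hz : π (η - σ (π η)) = 0 := by
            rw [map_sub, hπσ, sub_self]
          have := Set.mem_iInter₂.mp h1 (η - σ (π η)) hz
          have h0 : a (η - σ (π η)) = 0 := this
          rw [map_sub] at h0
          have := sub_eq_zero.mp h0
          simpa [ContinuousLinearMap.comp_apply] using this
        · simpa [ContinuousLinearMap.comp_apply] using (show a (σ m) = 0 from h2)
    rw [WeakStarClosed, himg]
    exact IsClosed.inter
      (isClosed_biInter fun η _ =>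
        isClosed_eq (WeakDual.eval_continuous η) continuous_const)
      (isClosed_eq (WeakDual.eval_continuous _) continuous_const)

theorem stmt8
    (X Y : Set (EuclideanSpace ℝ (Fin d)))
    (hXcl : IsClosed X) (hXcv : Convex ℝ X) (hYcl : IsClosed Y) (hYcv : Convex ℝ Y)
    (μ : Measure ↥X) [IsProbabilityMeasure μ]
    (ν : Measure ↥Y) [IsProbabilityMeasure ν] :
    Convex ℝ (Bmu X Y μ) ∧
    WeakStarClosed (StrongDual ℝ ((↥X × ↥Y) →ᵇ ℝ)) (Bmu X Y μ) ∧
    Convex ℝ (Cnu X Y ν) ∧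
    WeakStarClosed (StrongDual ℝ ((↥X × ↥Y) →ᵇ ℝ)) (Cnu X Y ν) := by
  have hXne : Nonempty ↥X := by
    by_contra h
    rw [not_nonempty_iff] at h
    have h1 : μ Set.univ = 1 := measure_univ
    rw [Set.univ_eq_empty_iff.mpr h, measure_empty] at h1
    exact zero_ne_one h1
  have hYne : Nonempty ↥Y := by
    by_contra h
    rw [not_nonempty_iff] at h
    have h1 : ν Set.univ = 1 := measure_univ
    rw [Set.univ_eq_empty_iff.mpr h, measure_empty] at h1
    exact zero_ne_one h1
  obtain ⟨x₀⟩ := hXne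
  obtain ⟨y₀⟩ := hYne
  set πX : StrongDual ℝ ((↥X × ↥Y) →ᵇ ℝ) →L[ℝ] StrongDual ℝ (↥X →ᵇ ℝ) :=
    (ContinuousLinearMap.compL ℝ (↥X →ᵇ ℝ) ((↥X × ↥Y) →ᵇ ℝ) ℝ).flip extX with hπX
  set σX : StrongDual ℝ (↥X →ᵇ ℝ) →L[ℝ] StrongDual ℝ ((↥X × ↥Y) →ᵇ ℝ) :=
    (ContinuousLinearMap.compL ℝ ((↥X × ↥Y) →ᵇ ℝ) (↥X →ᵇ ℝ) ℝ).flip (restXmap y₀) with hσX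
  set πY : StrongDual ℝ ((↥X × ↥Y) →ᵇ ℝ) →L[ℝ] StrongDual ℝ (↥Y →ᵇ ℝ) :=
    (ContinuousLinearMap.compL ℝ (↥Y →ᵇ ℝ) ((↥X × ↥Y) →ᵇ ℝ) ℝ).flip extY with hπY
  set σY : StrongDual ℝ (↥Y →ᵇ ℝ) →L[ℝ] StrongDual ℝ ((↥X × ↥Y) →ᵇ ℝ) :=
    (ContinuousLinearMap.compL ℝ ((↥X × ↥Y) →ᵇ ℝ) (↥Y →ᵇ ℝ) ℝ).flip (restYmap x₀) with hσY
  have hπσX : ∀ φ, πX (σX φ) = φ := by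
    intro φ
    show (φ.comp (restXmap y₀)).comp extX = φ
    rw [ContinuousLinearMap.comp_assoc, restXmap_comp_extX, ContinuousLinearMap.comp_id]
  have hπσY : ∀ φ, πY (σY φ) = φ := by
    intro φ
    show (φ.comp (restYmap x₀)).comp extY = φ
    rw [ContinuousLinearMap.comp_assoc, restYmap_comp_extY, ContinuousLinearMap.comp_id]
  have hB := regularlyConvex_aux πX σX hπσX (integrationCLM μ) (Bmu X Y μ) rfl
  have hC := regularlyConvex_aux πY σY hπσY (integrationCLM ν) (Cnu X Y ν) rfl
  exact ⟨hB.1, hB.2, hC.1, hC.2⟩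

end
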